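/- arXiv:1908.05095 — 2 statements merged into one kernel-verified Lean document; each statement's English description precedes it below -/
import Mathlib

section
/- Let n ∈ ℕ, 0 < s < 1, n > 4s, 0 < α < 2s, and let Ω ⊂ ℝⁿ be a bounded domain with 0 ∈ Ω. Assume μ_{α,λ'}(Ω) ≤ μ_α for every λ' > 0, and suppose there exists λ̄ > 0 with μ_{α,λ̄}(Ω) = μ_α. Then for every λ > λ̄ the infimum μ_{α,λ}(Ω) is not attained: there is no u ∈ H^s(Ω) with ∫_Ω |u(x)|^{2_{s,α}}/|x|^α dx = 1 and [u]_{s,Ω}² + λ∫_Ω |u|² dx = μ_{α,λ}(Ω). -/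
open MeasureTheory ENNReal Filter Topology

noncomputable section

/-- Euclidean space ℝⁿ. -/
abbrev Rn (n : ℕ) := EuclideanSpace ℝ (Fin n)

/-- The squared Gagliardo seminorm `[u]_{s,U}² = ∫_{U×U} |u(x)−u(y)|²/|x−y|^{n+2s} dx dy`. -/
def gagSq (n : ℕ) (s : ℝ) (U : Set (Rn n)) (u : Rn n → ℝ) : ℝ≥0∞ :=
  ∫⁻ x in U, ∫⁻ y in U, ENNReal.ofReal (|u x - u y| ^ 2 / ‖x - y‖ ^ ((n : ℝ) + 2 * s))

/-- The Hardy integral `∫_U |u(x)|^{2_{s,α}}/|x|^α dx` with `2_{s,α} = 2(n−α)/(n−2s)`. -/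
def hardyInt (n : ℕ) (s α : ℝ) (U : Set (Rn n)) (u : Rn n → ℝ) : ℝ≥0∞ :=
  ∫⁻ x in U, ENNReal.ofReal (|u x| ^ (2 * ((n : ℝ) - α) / ((n : ℝ) - 2 * s)) / ‖x‖ ^ α)

/-- Membership in `H^s(Ω)`: `u ∈ L²(Ω)` and `[u]_{s,Ω} < ∞`. -/
def memHs (n : ℕ) (s : ℝ) (Ω : Set (Rn n)) (u : Rn n → ℝ) : Prop :=
  MemLp u 2 (volume.restrict Ω) ∧ gagSq n s Ω u < ⊤

/-- The energy `[u]_{s,Ω}² + λ ∫_Ω |u|² dx`. -/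
def energy (n : ℕ) (s lam : ℝ) (Ω : Set (Rn n)) (u : Rn n → ℝ) : ℝ :=
  (gagSq n s Ω u).toReal + lam * ∫ x in Ω, (u x) ^ 2

/-- The optimal constant `μ_{α,λ}(Ω)`. -/
def mu (n : ℕ) (s α lam : ℝ) (Ω : Set (Rn n)) : ℝ :=
  sInf { c | ∃ u : Rn n → ℝ, memHs n s Ω u ∧ hardyInt n s α Ω u = 1 ∧
    c = energy n s lam Ω u }

/-- `u` vanishes at infinity: `|{|u| > a}| < ∞` for every `a > 0`. -/
def vanishesAtInfinity (n : ℕ) (u : Rn n → ℝ) : Prop :=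
  ∀ a : ℝ, 0 < a → volume {x : Rn n | a < |u x|} < ⊤

/-- The global constant `μ_α`. -/
def muGlob (n : ℕ) (s α : ℝ) : ℝ :=
  sInf { c | ∃ u : Rn n → ℝ, Measurable u ∧ vanishesAtInfinity n u ∧
    hardyInt n s α Set.univ u = 1 ∧ c = (gagSq n s Set.univ u).toReal }

/-- If `μ_{α,λ'}(Ω) ≤ μ_α` for all `λ' > 0` and `μ_{α,λ̄}(Ω) = μ_α` for some
`λ̄ > 0`, then for every `λ > λ̄` the infimum `μ_{α,λ}(Ω)` is not attained. -/
theorem stmt_9 (n : ℕ) (s α : ℝ) (Ω : Set (Rn n))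
    (hs : 0 < s) (hs1 : s < 1) (hn : 4 * s < (n : ℝ))
    (hα : 0 < α) (hα2 : α < 2 * s)
    (hΩo : IsOpen Ω) (hΩc : IsConnected Ω) (hΩb : Bornology.IsBounded Ω)
    (h0 : (0 : Rn n) ∈ Ω)
    (hle : ∀ lam' : ℝ, 0 < lam' → mu n s α lam' Ω ≤ muGlob n s α)
    (lamBar : ℝ) (hlamBar : 0 < lamBar)
    (heq : mu n s α lamBar Ω = muGlob n s α) :
    ∀ lam : ℝ, lamBar < lam →
      ¬ ∃ u : Rn n → ℝ, memHs n s Ω u ∧ hardyInt n s α Ω u = 1 ∧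
        energy n s lam Ω u = mu n s α lam Ω := by

  intro lam hlam
  rintro ⟨u, hu, hH, hE⟩
  have hns : 0 < (n:ℝ) - 2*s := by nlinarith
  have hnα : 0 < (n:ℝ) - α := by nlinarith
  have hInonneg : (0:ℝ) ≤ ∫ x in Ω, (u x)^2 := integral_nonneg fun x => sq_nonneg _
  have hbdd : BddBelow {c | ∃ v : Rn n → ℝ, memHs n s Ω v ∧ hardyInt n s α Ω v = 1 ∧
      c = energy n s lamBar Ω v} := by
    refine ⟨0, ?_⟩
    rintro c ⟨v, hv, hv1, rfl⟩
    have hv2 : (0:ℝ) ≤ ∫ x in Ω, (v x)^2 := integral_nonneg fun x => sq_nonneg _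
    exact add_nonneg ENNReal.toReal_nonneg (mul_nonneg hlamBar.le hv2)
  have h1 : mu n s α lamBar Ω ≤ energy n s lamBar Ω u :=
    csInf_le hbdd ⟨u, hu, hH, rfl⟩
  have h2 : mu n s α lam Ω ≤ muGlob n s α := hle lam (hlamBar.trans hlam)
  have key : energy n s lam Ω u ≤ energy n s lamBar Ω u := by
    calc energy n s lam Ω u = mu n s α lam Ω := hE
    _ ≤ muGlob n s α := h2
    _ = mu n s α lamBar Ω := heq.symm
    _ ≤ energy n s lamBar Ω u := h1
  unfold energy at key
  have hI0 : ∫ x in Ω, (u x)^2 = 0 := by nlinarith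
  have hsq : Integrable (fun x => (u x)^2) (volume.restrict Ω) := hu.1.integrable_sq
  have huz : u =ᵐ[volume.restrict Ω] 0 := by
    have h := (integral_eq_zero_iff_of_nonneg (fun x => sq_nonneg (u x)) hsq).mp hI0
    filter_upwards [h] with x hx
    have : u x ^ 2 = 0 := hx
    simpa [pow_eq_zero_iff] using this
  have hzero : hardyInt n s α Ω u = 0 := by
    unfold hardyInt
    have hz : (fun x => ENNReal.ofReal
        (|u x| ^ (2 * ((n : ℝ) - α) / ((n : ℝ) - 2 * s)) / ‖x‖ ^ α))
        =ᵐ[volume.restrict Ω] (fun _ => (0:ℝ≥0∞)) := by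
      filter_upwards [huz] with x hx
      have hx0 : u x = 0 := hx
      have hp : 2 * ((n : ℝ) - α) / ((n : ℝ) - 2 * s) ≠ 0 :=
        ne_of_gt (div_pos (by linarith) hns)
      simp [hx0, Real.zero_rpow hp]
    rw [lintegral_congr_ae hz, lintegral_zero]
  rw [hzero] at hH
  exact zero_ne_one hH
end
end

section
/- Let n ∈ ℕ, 0 < s < 1, and let Ω ⊆ ℝⁿ be an open set. Let ψ ∈ C_c^1(Ω) with 0 ≤ ψ ≤ 1 on Ω, extended by 0 to ℝⁿ. Then for every ε > 0 there exists a constant C = C(ψ, n, s, ε) > 0 such that for every u ∈ L²(Ω) with [u]_{s,Ω} < ∞ (and ψu extended by 0 outside Ω): [ψu]_s² ≤ (1+ε) ∫_{Ω×Ω} ψ(y)² |u(x)−u(y)|²/|x−y|^{n+2s} dx dy + C ∫_Ω |u|² dx. -/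
open MeasureTheory ENNReal Filter Topology

noncomputable section

section aux16
open Metric Module Set


lemma aux16_div_le_div_den {a b c : ℝ} (h : a ≤ b) (hc : 0 ≤ c) : a / c ≤ b / c := by
  rcases hc.eq_or_lt with rfl | hc'
  · simp
  · exact (div_le_div_iff_of_pos_right hc').2 h

lemma aux16_tail_ptwise {δ p r : ℝ} (hδ : 0 < δ) (hp : 0 < p) (hr : δ ≤ r) :
    r ^ (-p) ≤ (1 + δ⁻¹) ^ p * (1 + r) ^ (-p) := by
  have hr0 : 0 < r := hδ.trans_le hr
  have h1 : (1 + r) ≤ r * (1 + δ⁻¹) := by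
    have : 1 ≤ δ⁻¹ * r := by
      rw [← inv_mul_cancel₀ hδ.ne']
      exact mul_le_mul_of_nonneg_left hr (inv_nonneg.2 hδ.le)
    nlinarith
  have h2 : (1 + r) ^ p ≤ r ^ p * (1 + δ⁻¹) ^ p := by
    rw [← Real.mul_rpow hr0.le (by positivity)]
    exact Real.rpow_le_rpow (by positivity) h1 hp.le
  have hA : (0:ℝ) < r ^ p := Real.rpow_pos_of_pos hr0 p
  have hB : (0:ℝ) < (1 + r) ^ p := Real.rpow_pos_of_pos (by positivity) p
  rw [Real.rpow_neg hr0.le, Real.rpow_neg (by positivity : (0:ℝ) ≤ 1 + r),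
    ← div_eq_mul_inv, le_div_iff₀ hB, inv_mul_le_iff₀ hA]
  linarith

lemma aux16_lintegral_tail {n : ℕ} {δ p : ℝ} (hδ : 0 < δ) (hp : (n : ℝ) < p) :
    ∫⁻ z : Rn n, ENNReal.ofReal (if δ ≤ ‖z‖ then ‖z‖ ^ (-p) else 0) < ⊤ := by
  have hp0 : 0 < p := lt_of_le_of_lt (Nat.cast_nonneg n) hp
  have hb : ∀ z : Rn n, ENNReal.ofReal (if δ ≤ ‖z‖ then ‖z‖ ^ (-p) else 0) ≤
      ENNReal.ofReal ((1 + δ⁻¹) ^ p) * ENNReal.ofReal ((1 + ‖z‖) ^ (-p)) := by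
    intro z
    rw [← ENNReal.ofReal_mul (by positivity)]
    split_ifs with h
    · exact ENNReal.ofReal_le_ofReal (aux16_tail_ptwise hδ hp0 h)
    · simp [mul_nonneg (by positivity : (0:ℝ) ≤ (1+δ⁻¹)^p) (Real.rpow_nonneg (by positivity) _)]
  calc ∫⁻ z : Rn n, ENNReal.ofReal (if δ ≤ ‖z‖ then ‖z‖ ^ (-p) else 0)
      ≤ ∫⁻ z : Rn n, ENNReal.ofReal ((1 + δ⁻¹) ^ p) * ENNReal.ofReal ((1 + ‖z‖) ^ (-p)) :=
        lintegral_mono hb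
    _ = ENNReal.ofReal ((1 + δ⁻¹) ^ p) * ∫⁻ z : Rn n, ENNReal.ofReal ((1 + ‖z‖) ^ (-p)) :=
        lintegral_const_mul' _ _ ENNReal.ofReal_ne_top
    _ < ⊤ := ENNReal.mul_lt_top ENNReal.ofReal_lt_top
        (by rw [← finrank_euclideanSpace_fin (𝕜 := ℝ) (n := n)] at hp
            exact finite_integral_one_add_norm hp)

lemma aux16_lintegral_ball {n : ℕ} {q : ℝ} (hq : q < n) :
    ∫⁻ z in ball (0 : Rn n) 1, ENNReal.ofReal (‖z‖ ^ (-q)) < ⊤ := by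
  rcases le_or_gt q 0 with hq0 | hq0
  · have hb : ∀ z ∈ ball (0 : Rn n) 1, ENNReal.ofReal (‖z‖ ^ (-q)) ≤ 1 := by
      intro z hz
      rw [mem_ball_zero_iff] at hz
      rcases eq_or_ne z 0 with rfl | hz0
      · rcases eq_or_ne q 0 with rfl | hq'
        · simp
        · simp [Real.zero_rpow (neg_ne_zero.2 hq')]
      · have : ‖z‖ ^ (-q) ≤ 1 :=
          Real.rpow_le_one (norm_nonneg z) hz.le (by linarith)
        calc ENNReal.ofReal (‖z‖ ^ (-q)) ≤ ENNReal.ofReal 1 := ENNReal.ofReal_le_ofReal this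
          _ = 1 := ENNReal.ofReal_one
    calc ∫⁻ z in ball (0 : Rn n) 1, ENNReal.ofReal (‖z‖ ^ (-q))
        ≤ ∫⁻ _ in ball (0 : Rn n) 1, 1 := setLIntegral_mono' measurableSet_ball hb
      _ = volume (ball (0 : Rn n) 1) := by simp
      _ < ⊤ := measure_ball_lt_top
  · have hmeas : AEMeasurable (fun z : Rn n => ‖z‖ ^ (-q))
        (volume.restrict (ball (0 : Rn n) 1)) :=
      (by fun_prop : Measurable fun z : Rn n => ‖z‖ ^ (-q)).aemeasurable
    rw [lintegral_eq_lintegral_meas_le _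
      (Filter.Eventually.of_forall fun z => Real.rpow_nonneg (norm_nonneg z) _) hmeas]
    set μ := volume.restrict (ball (0 : Rn n) 1) with hμ
    have hball : volume (ball (0 : Rn n) 1) < ⊤ := measure_ball_lt_top
    have hsub : ∀ t : ℝ, 0 < t →
        {a : Rn n | t ≤ ‖a‖ ^ (-q)} ⊆ closedBall 0 (t ^ (-q)⁻¹) := by
      intro t ht z hz
      simp only [mem_setOf_eq] at hz
      rcases eq_or_ne z 0 with rfl | hz0
      · exfalso
        rw [norm_zero, Real.zero_rpow (neg_ne_zero.2 hq0.ne')] at hz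
        linarith
      · have hz0' : (0:ℝ) < ‖z‖ := norm_pos_iff.2 hz0
        rw [mem_closedBall_zero_iff]
        exact (Real.le_rpow_inv_iff_of_neg hz0' ht (neg_neg_of_pos hq0)).2 hz
    calc ∫⁻ t in Ioi (0:ℝ), μ {a | t ≤ ‖a‖ ^ (-q)}
        ≤ ∫⁻ t in Ioc (0:ℝ) 1 ∪ Ioi 1, μ {a | t ≤ ‖a‖ ^ (-q)} :=
          lintegral_mono_set Ioi_subset_Ioc_union_Ioi
      _ ≤ (∫⁻ t in Ioc (0:ℝ) 1, μ {a | t ≤ ‖a‖ ^ (-q)}) +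
          ∫⁻ t in Ioi (1:ℝ), μ {a | t ≤ ‖a‖ ^ (-q)} := lintegral_union_le _ _ _
      _ < ⊤ := by
          refine ENNReal.add_lt_top.2 ⟨?_, ?_⟩
          · calc ∫⁻ t in Ioc (0:ℝ) 1, μ {a | t ≤ ‖a‖ ^ (-q)}
                ≤ ∫⁻ _ in Ioc (0:ℝ) 1, volume (ball (0 : Rn n) 1) := by
                  refine setLIntegral_mono' measurableSet_Ioc fun t _ => ?_
                  exact (measure_mono (subset_univ _)).trans_eq
                    (by rw [Measure.restrict_apply_univ])
              _ = volume (ball (0 : Rn n) 1) * volume (Ioc (0:ℝ) 1) := setLIntegral_const _ _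
              _ < ⊤ := ENNReal.mul_lt_top hball (by simp)
          · have key : ∀ t ∈ Ioi (1:ℝ), μ {a | t ≤ ‖a‖ ^ (-q)} ≤
                ENNReal.ofReal (t ^ ((-q)⁻¹ * n)) * volume (ball (0 : Rn n) 1) := by
              intro t ht
              have ht0 : (0:ℝ) < t := lt_trans one_pos ht
              calc μ {a | t ≤ ‖a‖ ^ (-q)}
                  ≤ volume (closedBall (0 : Rn n) (t ^ (-q)⁻¹)) :=
                    (Measure.restrict_apply_le _ _).trans (measure_mono (hsub t ht0))
                _ = ENNReal.ofReal ((t ^ (-q)⁻¹) ^ finrank ℝ (Rn n)) * volume (ball (0:Rn n) 1) :=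
                    Measure.addHaar_closedBall _ _ (Real.rpow_nonneg ht0.le _)
                _ = ENNReal.ofReal (t ^ ((-q)⁻¹ * n)) * volume (ball (0 : Rn n) 1) := by
                    rw [finrank_euclideanSpace_fin, ← Real.rpow_natCast (t ^ (-q)⁻¹) n,
                      ← Real.rpow_mul ht0.le]
            calc ∫⁻ t in Ioi (1:ℝ), μ {a | t ≤ ‖a‖ ^ (-q)}
                ≤ ∫⁻ t in Ioi (1:ℝ), ENNReal.ofReal (t ^ ((-q)⁻¹ * n)) *
                    volume (ball (0 : Rn n) 1) := setLIntegral_mono' measurableSet_Ioi key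
              _ = (∫⁻ t in Ioi (1:ℝ), ENNReal.ofReal (t ^ ((-q)⁻¹ * n))) *
                    volume (ball (0 : Rn n) 1) := lintegral_mul_const' _ _ hball.ne
              _ < ⊤ := by
                  refine ENNReal.mul_lt_top ?_ hball
                  refine IntegrableOn.setLIntegral_lt_top ?_
                  refine integrableOn_Ioi_rpow_of_lt ?_ one_pos
                  rw [← neg_inv, neg_mul, neg_lt_neg_iff, lt_inv_mul_iff₀ hq0, mul_one]
                  exact hq

lemma aux16_lintegral_Q {n : ℕ} {L p : ℝ} (hpn : (n : ℝ) < p) (hp2 : p - 2 < n) :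
    ∫⁻ z : Rn n, ENNReal.ofReal (min ((L * ‖z‖) ^ 2) 1 / ‖z‖ ^ p) < ⊤ := by
  have hp0 : 0 < p := lt_of_le_of_lt (Nat.cast_nonneg n) hpn
  rw [← lintegral_add_compl _ (measurableSet_ball (x := (0 : Rn n)) (ε := 1))]
  refine ENNReal.add_lt_top.2 ⟨?_, ?_⟩
  · -- ball part
    have hb : ∀ z ∈ ball (0 : Rn n) 1, ENNReal.ofReal (min ((L * ‖z‖) ^ 2) 1 / ‖z‖ ^ p) ≤
        ENNReal.ofReal (L ^ 2) * ENNReal.ofReal (‖z‖ ^ (-(p - 2))) := by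
      intro z _
      rw [← ENNReal.ofReal_mul (sq_nonneg L)]
      rcases eq_or_ne z 0 with rfl | hz0
      · simp [Real.zero_rpow hp0.ne',
          mul_nonneg (sq_nonneg L) (Real.rpow_nonneg (norm_nonneg _) _)]
      · have hz0' : (0:ℝ) < ‖z‖ := norm_pos_iff.2 hz0
        refine ENNReal.ofReal_le_ofReal ?_
        have h1 : min ((L * ‖z‖) ^ 2) 1 ≤ L ^ 2 * ‖z‖ ^ (2:ℝ) := by
          rw [Real.rpow_two]
          calc min ((L * ‖z‖) ^ 2) 1 ≤ (L * ‖z‖) ^ 2 := min_le_left _ _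
            _ = L ^ 2 * ‖z‖ ^ 2 := mul_pow _ _ _
        calc min ((L * ‖z‖) ^ 2) 1 / ‖z‖ ^ p ≤ (L ^ 2 * ‖z‖ ^ (2:ℝ)) / ‖z‖ ^ p :=
              aux16_div_le_div_den h1 (Real.rpow_nonneg (norm_nonneg _) _)
          _ = L ^ 2 * ‖z‖ ^ (-(p - 2)) := by
              rw [mul_div_assoc, neg_sub, Real.rpow_sub hz0']
    calc ∫⁻ z in ball (0 : Rn n) 1, ENNReal.ofReal (min ((L * ‖z‖) ^ 2) 1 / ‖z‖ ^ p)
        ≤ ∫⁻ z in ball (0 : Rn n) 1,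
            ENNReal.ofReal (L ^ 2) * ENNReal.ofReal (‖z‖ ^ (-(p - 2))) :=
          setLIntegral_mono' measurableSet_ball hb
      _ = ENNReal.ofReal (L ^ 2) * ∫⁻ z in ball (0 : Rn n) 1,
            ENNReal.ofReal (‖z‖ ^ (-(p - 2))) := lintegral_const_mul' _ _ ENNReal.ofReal_ne_top
      _ < ⊤ := ENNReal.mul_lt_top ENNReal.ofReal_lt_top (aux16_lintegral_ball hp2)
  · -- complement part
    have hb : ∀ z ∈ (ball (0 : Rn n) 1)ᶜ,
        ENNReal.ofReal (min ((L * ‖z‖) ^ 2) 1 / ‖z‖ ^ p) ≤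
        ENNReal.ofReal (if (1:ℝ) ≤ ‖z‖ then ‖z‖ ^ (-p) else 0) := by
      intro z hz
      rw [mem_compl_iff, mem_ball_zero_iff, not_lt] at hz
      rw [if_pos hz]
      refine ENNReal.ofReal_le_ofReal ?_
      have hz0 : (0:ℝ) < ‖z‖ := lt_of_lt_of_le one_pos hz
      rw [Real.rpow_neg hz0.le, ← one_div]
      exact aux16_div_le_div_den (min_le_right _ _) (Real.rpow_nonneg (norm_nonneg _) _)
    calc ∫⁻ z in (ball (0 : Rn n) 1)ᶜ, ENNReal.ofReal (min ((L * ‖z‖) ^ 2) 1 / ‖z‖ ^ p)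
        ≤ ∫⁻ z in (ball (0 : Rn n) 1)ᶜ,
            ENNReal.ofReal (if (1:ℝ) ≤ ‖z‖ then ‖z‖ ^ (-p) else 0) :=
          setLIntegral_mono' measurableSet_ball.compl hb
      _ ≤ ∫⁻ z : Rn n, ENNReal.ofReal (if (1:ℝ) ≤ ‖z‖ then ‖z‖ ^ (-p) else 0) :=
          setLIntegral_le_lintegral _ _
      _ < ⊤ := aux16_lintegral_tail one_pos hpn


set_option maxHeartbeats 2000000 in
open Metric Module Set in
lemma aux16_main_est (n : ℕ) (s : ℝ) (hs : 0 < s) (hs1 : s < 1)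
    (Ω : Set (Rn n)) (hΩo : IsOpen Ω)
    (ψ : Rn n → ℝ) (hψ : ContDiff ℝ 1 ψ) (hψc : HasCompactSupport ψ)
    (hψsupp : tsupport ψ ⊆ Ω) (hψ0 : ∀ x, 0 ≤ ψ x) (hψ1 : ∀ x, ψ x ≤ 1)
    (ε : ℝ) (hε : 0 < ε) :
    ∃ C : ℝ, 0 < C ∧ ∀ u : Rn n → ℝ, Measurable u → (∀ x, x ∉ Ω → u x = 0) →
      gagSq n s Set.univ (fun x => ψ x * u x) ≤
        ENNReal.ofReal (1 + ε) * (∫⁻ x in Ω, ∫⁻ y in Ω,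
            ENNReal.ofReal ((ψ y) ^ 2 * |u x - u y| ^ 2 / ‖x - y‖ ^ ((n : ℝ) + 2 * s))) +
          ENNReal.ofReal C * ∫⁻ x in Ω, ENNReal.ofReal ((u x) ^ 2) := by
  have hψm : Measurable ψ := hψ.continuous.measurable
  have hΩm : MeasurableSet Ω := hΩo.measurableSet
  set p : ℝ := (n : ℝ) + 2 * s with hpdef
  have hpn : (n : ℝ) < p := by rw [hpdef]; linarith
  have hp0 : 0 < p := lt_of_le_of_lt (Nat.cast_nonneg n) hpn
  have hp2 : p - 2 < n := by rw [hpdef]; linarith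
  obtain ⟨L, hLip⟩ := ContDiff.lipschitzWith_of_hasCompactSupport hψc hψ one_ne_zero
  obtain ⟨δ, hδ0, hδΩ⟩ := IsCompact.exists_thickening_subset_open hψc hΩo hψsupp
  have hψzero : ∀ x, x ∉ Ω → ψ x = 0 := fun x hx =>
    image_eq_zero_of_notMem_tsupport fun h => hx (hψsupp h)
  set W : Rn n → ℝ≥0∞ := fun z => ENNReal.ofReal (if δ ≤ ‖z‖ then ‖z‖ ^ (-p) else 0) with hW
  have hWm : Measurable W := by
    refine Measurable.ennreal_ofReal ?_
    exact Measurable.ite (measurableSet_le measurable_const measurable_norm)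
      (by fun_prop) measurable_const
  set M : ℝ≥0∞ := ∫⁻ z : Rn n, ENNReal.ofReal (min (((L:ℝ) * ‖z‖) ^ 2) 1 / ‖z‖ ^ p) with hM
  set T : ℝ≥0∞ := ∫⁻ z : Rn n, W z with hT
  have hMfin : M < ⊤ := aux16_lintegral_Q hpn hp2
  have hTfin : T < ⊤ := aux16_lintegral_tail hδ0 hpn
  have hTdef : ∀ y : Rn n, (∫⁻ x, W (x - y)) = T := fun y =>
    (measurePreserving_sub_right volume y).lintegral_comp hWm
  have hCtot_fin : ENNReal.ofReal (1 + ε⁻¹) * M + T ≠ ⊤ :=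
    (ENNReal.add_lt_top.2 ⟨ENNReal.mul_lt_top ENNReal.ofReal_lt_top hMfin, hTfin⟩).ne
  refine ⟨(ENNReal.ofReal (1 + ε⁻¹) * M + T).toReal + 1, by positivity, ?_⟩
  have hCle : ENNReal.ofReal (1 + ε⁻¹) * M + T ≤
      ENNReal.ofReal ((ENNReal.ofReal (1 + ε⁻¹) * M + T).toReal + 1) := by
    conv_lhs => rw [← ENNReal.ofReal_toReal hCtot_fin]
    exact ENNReal.ofReal_le_ofReal (by linarith)
  intro u hum hu0
  have hM_bound : ∀ x : Rn n,
      (∫⁻ y, ENNReal.ofReal ((ψ x - ψ y) ^ 2 / ‖x - y‖ ^ p)) ≤ M := by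
    intro x
    have hpt : ∀ y : Rn n, ENNReal.ofReal ((ψ x - ψ y) ^ 2 / ‖x - y‖ ^ p) ≤
        ENNReal.ofReal (min (((L:ℝ) * ‖y - x‖) ^ 2) 1 / ‖y - x‖ ^ p) := by
      intro y
      refine ENNReal.ofReal_le_ofReal ?_
      rw [norm_sub_rev y x]
      refine aux16_div_le_div_den ?_ (Real.rpow_nonneg (norm_nonneg _) _)
      refine le_min ?_ ?_
      · have h1 : |ψ x - ψ y| ≤ (L:ℝ) * ‖x - y‖ := by
          have := hLip.dist_le_mul x y
          rwa [Real.dist_eq, dist_eq_norm] at this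
        calc (ψ x - ψ y) ^ 2 = |ψ x - ψ y| ^ 2 := (sq_abs _).symm
          _ ≤ ((L:ℝ) * ‖x - y‖) ^ 2 := pow_le_pow_left₀ (abs_nonneg _) h1 2
      · have h2 : |ψ x - ψ y| ≤ 1 := by
          rw [abs_le]
          constructor <;> nlinarith [hψ0 x, hψ1 x, hψ0 y, hψ1 y]
        calc (ψ x - ψ y) ^ 2 = |ψ x - ψ y| ^ 2 := (sq_abs _).symm
          _ ≤ 1 := by nlinarith [abs_nonneg (ψ x - ψ y)]
    calc (∫⁻ y, ENNReal.ofReal ((ψ x - ψ y) ^ 2 / ‖x - y‖ ^ p))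
        ≤ ∫⁻ y, ENNReal.ofReal (min (((L:ℝ) * ‖y - x‖) ^ 2) 1 / ‖y - x‖ ^ p) :=
          lintegral_mono hpt
      _ = M := by
          rw [hM]
          have hQm : Measurable fun z : Rn n =>
              ENNReal.ofReal (min (((L:ℝ) * ‖z‖) ^ 2) 1 / ‖z‖ ^ p) := by fun_prop
          exact (measurePreserving_sub_right volume x).lintegral_comp hQm
  have hpt_main : ∀ x y : Rn n,
      ENNReal.ofReal (|ψ x * u x - ψ y * u y| ^ 2 / ‖x - y‖ ^ p) ≤
        ENNReal.ofReal (1 + ε) *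
            ENNReal.ofReal ((ψ y) ^ 2 * |u x - u y| ^ 2 / ‖x - y‖ ^ p) +
          ENNReal.ofReal (1 + ε⁻¹) * (ENNReal.ofReal ((u x) ^ 2) *
            ENNReal.ofReal ((ψ x - ψ y) ^ 2 / ‖x - y‖ ^ p)) := by
    intro x y
    have hd : (0:ℝ) ≤ ‖x - y‖ ^ p := Real.rpow_nonneg (norm_nonneg _) _
    rw [← ENNReal.ofReal_mul (by positivity : (0:ℝ) ≤ 1 + ε),
        ← ENNReal.ofReal_mul (sq_nonneg (u x)),
        ← ENNReal.ofReal_mul (by positivity : (0:ℝ) ≤ 1 + ε⁻¹),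
        ← ENNReal.ofReal_add (by positivity) (by positivity)]
    refine ENNReal.ofReal_le_ofReal ?_
    set a := ψ y * (u x - u y) with ha
    set b := u x * (ψ x - ψ y) with hb
    have hab : ψ x * u x - ψ y * u y = a + b := by rw [ha, hb]; ring
    have h2ab : 2 * (a * b) ≤ ε * a ^ 2 + ε⁻¹ * b ^ 2 := by
      nlinarith [mul_nonneg (inv_nonneg.2 hε.le) (sq_nonneg (ε * a - b)),
        mul_inv_cancel₀ hε.ne', sq_nonneg (ε * a - b)]
    have hkey : |ψ x * u x - ψ y * u y| ^ 2 ≤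
        (1 + ε) * ((ψ y) ^ 2 * |u x - u y| ^ 2) + (1 + ε⁻¹) * ((u x) ^ 2 * (ψ x - ψ y) ^ 2) := by
      rw [sq_abs, sq_abs, hab]
      have haa : (ψ y) ^ 2 * (u x - u y) ^ 2 = a ^ 2 := (mul_pow _ _ _).symm
      have hbb : (u x) ^ 2 * (ψ x - ψ y) ^ 2 = b ^ 2 := (mul_pow _ _ _).symm
      rw [haa, hbb]
      nlinarith [h2ab, sq_nonneg a, sq_nonneg b]
    calc |ψ x * u x - ψ y * u y| ^ 2 / ‖x - y‖ ^ p
        ≤ ((1 + ε) * ((ψ y) ^ 2 * |u x - u y| ^ 2) +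
            (1 + ε⁻¹) * ((u x) ^ 2 * (ψ x - ψ y) ^ 2)) / ‖x - y‖ ^ p :=
          aux16_div_le_div_den hkey hd
      _ = (1 + ε) * ((ψ y) ^ 2 * |u x - u y| ^ 2 / ‖x - y‖ ^ p) +
          (1 + ε⁻¹) * ((u x) ^ 2 * ((ψ x - ψ y) ^ 2 / ‖x - y‖ ^ p)) := by ring
  have hpt_cross : ∀ x ∈ Ωᶜ, ∀ y : Rn n,
      ENNReal.ofReal (|ψ x * u x - ψ y * u y| ^ 2 / ‖x - y‖ ^ p) ≤
        ENNReal.ofReal ((u y) ^ 2) * W (x - y) := by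
    intro x hx y
    rw [mem_compl_iff] at hx
    have hψx : ψ x = 0 := hψzero x hx
    by_cases hyK : y ∈ tsupport ψ
    · have hd : δ ≤ ‖x - y‖ := by
        have hxt : x ∉ thickening δ (tsupport ψ) := fun h => hx (hδΩ h)
        rw [mem_thickening_iff] at hxt
        push_neg at hxt
        have := hxt y hyK
        rwa [dist_eq_norm] at this
      rw [hW]
      simp only []
      rw [if_pos hd, ← ENNReal.ofReal_mul (sq_nonneg _)]
      refine ENNReal.ofReal_le_ofReal ?_
      rw [hψx, zero_mul, zero_sub, abs_neg, abs_mul, mul_pow,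
        Real.rpow_neg (norm_nonneg _), div_eq_mul_inv]
      have h1 : |ψ y| ^ 2 * |u y| ^ 2 ≤ (u y) ^ 2 := by
        rw [sq_abs, sq_abs]
        have hψsq : ψ y ^ 2 ≤ 1 := by nlinarith [hψ0 y, hψ1 y]
        exact mul_le_of_le_one_left (sq_nonneg _) hψsq
      exact mul_le_mul_of_nonneg_right h1
        (inv_nonneg.2 (Real.rpow_nonneg (norm_nonneg _) _))
    · have hψy : ψ y = 0 := image_eq_zero_of_notMem_tsupport hyK
      rw [hψx, hψy]
      simp
  have hfinal : gagSq n s Set.univ (fun x => ψ x * u x) ≤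
      ENNReal.ofReal (1 + ε) * (∫⁻ x in Ω, ∫⁻ y in Ω,
          ENNReal.ofReal ((ψ y) ^ 2 * |u x - u y| ^ 2 / ‖x - y‖ ^ p)) +
        (ENNReal.ofReal (1 + ε⁻¹) * M + T) *
          ∫⁻ x in Ω, ENNReal.ofReal ((u x) ^ 2) := by
    -- abbreviations
    set G : ℝ≥0∞ := ∫⁻ x in Ω, ∫⁻ y in Ω,
      ENNReal.ofReal ((ψ y) ^ 2 * |u x - u y| ^ 2 / ‖x - y‖ ^ p) with hG
    set U : ℝ≥0∞ := ∫⁻ x in Ω, ENNReal.ofReal ((u x) ^ 2) with hU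
    have hg_unc : Measurable (Function.uncurry fun x y : Rn n =>
        ENNReal.ofReal ((ψ y) ^ 2 * |u x - u y| ^ 2 / ‖x - y‖ ^ p)) := by fun_prop
    -- inner integral over univ equals over Ω
    have hGx : ∀ x : Rn n,
        (∫⁻ y, ENNReal.ofReal ((ψ y) ^ 2 * |u x - u y| ^ 2 / ‖x - y‖ ^ p)) =
        ∫⁻ y in Ω, ENNReal.ofReal ((ψ y) ^ 2 * |u x - u y| ^ 2 / ‖x - y‖ ^ p) := by
      intro x
      conv_lhs => rw [← lintegral_add_compl
        (fun y => ENNReal.ofReal ((ψ y) ^ 2 * |u x - u y| ^ 2 / ‖x - y‖ ^ p)) hΩm]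
      have hz : ∀ y ∈ Ωᶜ,
          ENNReal.ofReal ((ψ y) ^ 2 * |u x - u y| ^ 2 / ‖x - y‖ ^ p) = 0 := by
        intro y hy
        rw [hψzero y hy]
        simp
      rw [setLIntegral_congr_fun hΩm.compl hz, lintegral_zero, add_zero]
    -- split the outer integral
    have hFsplit : gagSq n s Set.univ (fun x => ψ x * u x) =
        (∫⁻ x in Ω, ∫⁻ y,
            ENNReal.ofReal (|ψ x * u x - ψ y * u y| ^ 2 / ‖x - y‖ ^ p)) +
        ∫⁻ x in Ωᶜ, ∫⁻ y,
            ENNReal.ofReal (|ψ x * u x - ψ y * u y| ^ 2 / ‖x - y‖ ^ p) := by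
      simp only [gagSq, Measure.restrict_univ]
      exact (lintegral_add_compl _ hΩm).symm
    -- Part A : over Ω
    have hA : (∫⁻ x in Ω, ∫⁻ y,
        ENNReal.ofReal (|ψ x * u x - ψ y * u y| ^ 2 / ‖x - y‖ ^ p)) ≤
        ENNReal.ofReal (1 + ε) * G + (ENNReal.ofReal (1 + ε⁻¹) * M) * U := by
      have hstep : ∀ x : Rn n, (∫⁻ y,
          ENNReal.ofReal (|ψ x * u x - ψ y * u y| ^ 2 / ‖x - y‖ ^ p)) ≤
          ENNReal.ofReal (1 + ε) *
              (∫⁻ y in Ω, ENNReal.ofReal ((ψ y) ^ 2 * |u x - u y| ^ 2 / ‖x - y‖ ^ p)) +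
            (ENNReal.ofReal (1 + ε⁻¹) * M) * ENNReal.ofReal ((u x) ^ 2) := by
        intro x
        calc (∫⁻ y, ENNReal.ofReal (|ψ x * u x - ψ y * u y| ^ 2 / ‖x - y‖ ^ p))
            ≤ ∫⁻ y, (ENNReal.ofReal (1 + ε) *
                ENNReal.ofReal ((ψ y) ^ 2 * |u x - u y| ^ 2 / ‖x - y‖ ^ p) +
              ENNReal.ofReal (1 + ε⁻¹) * (ENNReal.ofReal ((u x) ^ 2) *
                ENNReal.ofReal ((ψ x - ψ y) ^ 2 / ‖x - y‖ ^ p))) :=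
              lintegral_mono (hpt_main x)
          _ = ENNReal.ofReal (1 + ε) *
                (∫⁻ y, ENNReal.ofReal ((ψ y) ^ 2 * |u x - u y| ^ 2 / ‖x - y‖ ^ p)) +
              (ENNReal.ofReal (1 + ε⁻¹) * ENNReal.ofReal ((u x) ^ 2)) *
                (∫⁻ y, ENNReal.ofReal ((ψ x - ψ y) ^ 2 / ‖x - y‖ ^ p)) := by
              rw [lintegral_add_left (by fun_prop)]
              congr 1
              · exact lintegral_const_mul' _ _ ENNReal.ofReal_ne_top
              · simp only [← mul_assoc]
                exact lintegral_const_mul' _ _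
                  (ENNReal.mul_ne_top ENNReal.ofReal_ne_top ENNReal.ofReal_ne_top)
          _ ≤ ENNReal.ofReal (1 + ε) *
                (∫⁻ y in Ω, ENNReal.ofReal ((ψ y) ^ 2 * |u x - u y| ^ 2 / ‖x - y‖ ^ p)) +
              (ENNReal.ofReal (1 + ε⁻¹) * ENNReal.ofReal ((u x) ^ 2)) * M := by
              refine add_le_add (le_of_eq (by rw [hGx x])) (mul_le_mul_right (hM_bound x) _)
          _ = ENNReal.ofReal (1 + ε) *
                (∫⁻ y in Ω, ENNReal.ofReal ((ψ y) ^ 2 * |u x - u y| ^ 2 / ‖x - y‖ ^ p)) +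
              (ENNReal.ofReal (1 + ε⁻¹) * M) * ENNReal.ofReal ((u x) ^ 2) := by
              congr 1
              rw [mul_assoc, mul_comm (ENNReal.ofReal (u x ^ 2)) M, ← mul_assoc]
      calc (∫⁻ x in Ω, ∫⁻ y,
          ENNReal.ofReal (|ψ x * u x - ψ y * u y| ^ 2 / ‖x - y‖ ^ p))
          ≤ ∫⁻ x in Ω, (ENNReal.ofReal (1 + ε) *
              (∫⁻ y in Ω, ENNReal.ofReal ((ψ y) ^ 2 * |u x - u y| ^ 2 / ‖x - y‖ ^ p)) +
            (ENNReal.ofReal (1 + ε⁻¹) * M) * ENNReal.ofReal ((u x) ^ 2)) :=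
            lintegral_mono fun x => hstep x
        _ = ENNReal.ofReal (1 + ε) * G + (ENNReal.ofReal (1 + ε⁻¹) * M) * U := by
            rw [lintegral_add_left]
            · congr 1
              · exact lintegral_const_mul' _ _ ENNReal.ofReal_ne_top
              · exact lintegral_const_mul' _ _
                  (ENNReal.mul_ne_top ENNReal.ofReal_ne_top hMfin.ne)
            · exact (Measurable.lintegral_prod_right hg_unc).const_mul _
    -- Part B : cross term
    have hB : (∫⁻ x in Ωᶜ, ∫⁻ y,
        ENNReal.ofReal (|ψ x * u x - ψ y * u y| ^ 2 / ‖x - y‖ ^ p)) ≤ T * U := by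
      have hunc2 : Measurable (Function.uncurry fun x y : Rn n =>
          ENNReal.ofReal ((u y) ^ 2) * W (x - y)) := by
        refine Measurable.mul ?_ (hWm.comp (measurable_fst.sub measurable_snd))
        fun_prop
      calc (∫⁻ x in Ωᶜ, ∫⁻ y,
          ENNReal.ofReal (|ψ x * u x - ψ y * u y| ^ 2 / ‖x - y‖ ^ p))
          ≤ ∫⁻ x in Ωᶜ, ∫⁻ y, ENNReal.ofReal ((u y) ^ 2) * W (x - y) :=
            setLIntegral_mono' hΩm.compl fun x hx => lintegral_mono (hpt_cross x hx)
        _ = ∫⁻ y, ∫⁻ x in Ωᶜ, ENNReal.ofReal ((u y) ^ 2) * W (x - y) :=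
            lintegral_lintegral_swap hunc2.aemeasurable
        _ = ∫⁻ y, ENNReal.ofReal ((u y) ^ 2) * ∫⁻ x in Ωᶜ, W (x - y) :=
            lintegral_congr fun y => lintegral_const_mul' _ _ ENNReal.ofReal_ne_top
        _ ≤ ∫⁻ y, ENNReal.ofReal ((u y) ^ 2) * T := by
            refine lintegral_mono fun y => mul_le_mul_right ?_ _
            calc (∫⁻ x in Ωᶜ, W (x - y)) ≤ ∫⁻ x, W (x - y) := setLIntegral_le_lintegral _ _
              _ = T := hTdef y
        _ = T * ∫⁻ y, ENNReal.ofReal ((u y) ^ 2) := by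
            rw [lintegral_mul_const' T _ hTfin.ne, mul_comm]
        _ = T * U := by
            congr 1
            conv_lhs => rw [← lintegral_add_compl
              (fun y => ENNReal.ofReal ((u y) ^ 2)) hΩm]
            have hz : ∀ y ∈ Ωᶜ, ENNReal.ofReal ((u y) ^ 2) = 0 := by
              intro y hy
              rw [hu0 y hy]
              simp
            rw [setLIntegral_congr_fun hΩm.compl hz, lintegral_zero, add_zero]
    calc gagSq n s Set.univ (fun x => ψ x * u x)
        = _ + _ := hFsplit
      _ ≤ (ENNReal.ofReal (1 + ε) * G + (ENNReal.ofReal (1 + ε⁻¹) * M) * U) + T * U :=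
          add_le_add hA hB
      _ = ENNReal.ofReal (1 + ε) * G + (ENNReal.ofReal (1 + ε⁻¹) * M + T) * U := by
          rw [add_assoc, ← add_mul]
  refine hfinal.trans ?_
  exact add_le_add_right (mul_le_mul_left hCle _) _

end aux16

/-- For `ψ ∈ C_c^1(Ω)` with `0 ≤ ψ ≤ 1` and every `ε > 0` there is
`C > 0` such that for every `u ∈ L²(Ω)` with `[u]_{s,Ω} < ∞`,
`[ψu]_s² ≤ (1+ε) ∫_{Ω×Ω} ψ(y)²|u(x)−u(y)|²/|x−y|^{n+2s} + C ∫_Ω |u|²`. -/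
theorem stmt_16 (n : ℕ) (s : ℝ) (hs : 0 < s) (hs1 : s < 1)
    (Ω : Set (Rn n)) (hΩo : IsOpen Ω)
    (ψ : Rn n → ℝ) (hψ : ContDiff ℝ 1 ψ) (hψc : HasCompactSupport ψ)
    (hψsupp : tsupport ψ ⊆ Ω)
    (hψ0 : ∀ x, 0 ≤ ψ x) (hψ1 : ∀ x, ψ x ≤ 1) :
    ∀ ε : ℝ, 0 < ε → ∃ C : ℝ, 0 < C ∧
      ∀ u : Rn n → ℝ, MemLp u 2 (volume.restrict Ω) → gagSq n s Ω u < ⊤ →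
        gagSq n s Set.univ (fun x => ψ x * u x) ≤
          ENNReal.ofReal (1 + ε) *
              (∫⁻ x in Ω, ∫⁻ y in Ω,
                ENNReal.ofReal ((ψ y) ^ 2 * |u x - u y| ^ 2 / ‖x - y‖ ^ ((n : ℝ) + 2 * s))) +
            ENNReal.ofReal C * ∫⁻ x in Ω, ENNReal.ofReal ((u x) ^ 2) := by
  classical
  intro ε hε
  obtain ⟨C, hC0, hCest⟩ := aux16_main_est n s hs hs1 Ω hΩo ψ hψ hψc hψsupp hψ0 hψ1 ε hε
  refine ⟨C, hC0, ?_⟩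
  intro u huL2 _
  have hΩm : MeasurableSet Ω := hΩo.measurableSet
  have hψzero : ∀ x, x ∉ Ω → ψ x = 0 := fun x hx =>
    image_eq_zero_of_notMem_tsupport fun h => hx (hψsupp h)
  obtain ⟨g, hgsm, hug⟩ := huL2.aestronglyMeasurable
  set v : Rn n → ℝ := fun x => if x ∈ Ω then g x else 0 with hv
  have hvm : Measurable v := Measurable.ite hΩm hgsm.measurable measurable_const
  have hv0 : ∀ x, x ∉ Ω → v x = 0 := fun x hx => if_neg hx
  have h1 : ∀ᵐ x : Rn n, x ∈ Ω → u x = v x := by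
    have h1' := (ae_restrict_iff' hΩm).1 hug
    filter_upwards [h1'] with x hx hxΩ
    rw [hv]
    simp only [if_pos hxΩ]
    exact hx hxΩ
  have h2 : ∀ᵐ x : Rn n, ψ x * u x = ψ x * v x := by
    filter_upwards [h1] with x hx
    by_cases hxΩ : x ∈ Ω
    · rw [hx hxΩ]
    · rw [hψzero x hxΩ, zero_mul, zero_mul]
  have hrestr : u =ᵐ[volume.restrict Ω] v := by
    filter_upwards [hug, ae_restrict_mem hΩm] with x hx hxΩ
    rw [hv]
    simp only [if_pos hxΩ]
    exact hx
  have e1 : gagSq n s Set.univ (fun x => ψ x * u x) =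
      gagSq n s Set.univ (fun x => ψ x * v x) := by
    simp only [gagSq, Measure.restrict_univ]
    refine lintegral_congr_ae ?_
    filter_upwards [h2] with x hx
    refine lintegral_congr_ae ?_
    filter_upwards [h2] with y hy
    rw [hx, hy]
  have e2 : (∫⁻ x in Ω, ∫⁻ y in Ω,
        ENNReal.ofReal ((ψ y) ^ 2 * |u x - u y| ^ 2 / ‖x - y‖ ^ ((n : ℝ) + 2 * s))) =
      ∫⁻ x in Ω, ∫⁻ y in Ω,
        ENNReal.ofReal ((ψ y) ^ 2 * |v x - v y| ^ 2 / ‖x - y‖ ^ ((n : ℝ) + 2 * s)) := by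
    refine lintegral_congr_ae ?_
    filter_upwards [hrestr] with x hx
    refine lintegral_congr_ae ?_
    filter_upwards [hrestr] with y hy
    rw [hx, hy]
  have e3 : (∫⁻ x in Ω, ENNReal.ofReal ((u x) ^ 2)) =
      ∫⁻ x in Ω, ENNReal.ofReal ((v x) ^ 2) := by
    refine lintegral_congr_ae ?_
    filter_upwards [hrestr] with x hx
    rw [hx]
  rw [e1, e2, e3]
  exact hCest v hvm hv0
end
end
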